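/- arXiv:1303.1927 — 5 statements merged into one kernel-verified Lean document; each statement's English description precedes it below -/
import Mathlib

section
/- Let X, Y, Z be random vectors such that the conditional distribution of X given Z = z is smaller in the linear stochastic order than the conditional distribution of Y given Z = z for every z in the support of Z. Then X ⪯_l-st Y (the linear stochastic order is closed under mixtures). -/
open MeasureTheory ProbabilityTheory
noncomputable section

/-- `X ⪯_l-st Y`: for every nonnegative vector `s`, `P(sᵀX > t) ≤ P(sᵀY > t)` for all `t`. -/
def LinStOrd {ι : Type*} [Fintype ι] (μ ν : Measure (ι → ℝ)) : Prop :=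
  ∀ s : ι → ℝ, (∀ i, 0 ≤ s i) → ∀ t : ℝ,
    μ {x | t < ∑ i, s i * x i} ≤ ν {x | t < ∑ i, s i * x i}

/-- Closure of the linear stochastic order under mixtures: if the conditional distribution of `X`
given `Z = z` is smaller (in the linear stochastic order) than that of `Y` given `Z = z` for
(almost) every `z` in the support of `Z`, then the marginal distributions are ordered. -/
theorem linStOrd_mixture {α : Type*} [MeasurableSpace α] {ι : Type*} [Fintype ι]
    (ρ : Measure α) [IsProbabilityMeasure ρ]
    (κX κY : Kernel α (ι → ℝ)) [IsMarkovKernel κX] [IsMarkovKernel κY]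
    (h : ∀ᵐ z ∂ρ, LinStOrd (κX z) (κY z)) :
    LinStOrd (ρ.bind (fun z => κX z)) (ρ.bind (fun z => κY z)) := by
  intro s hs t
  have hm : MeasurableSet {x : ι → ℝ | t < ∑ i, s i * x i} :=
    measurableSet_lt measurable_const (by fun_prop)
  rw [Measure.bind_apply hm (κX.measurable.aemeasurable),
    Measure.bind_apply hm (κY.measurable.aemeasurable)]
  exact lintegral_mono_ae (h.mono fun z hz => hz s hs t)
end
end

section
/- Let X_1,...,X_n be independent random vectors of dimensions p_1,...,p_n, and Y_1,...,Y_n independent random vectors of the same dimensions, with X_i ⪯_l-st Y_i for each i. Then the concatenated vector (X_1,...,X_n) is smaller in the linear stochastic order than (Y_1,...,Y_n). -/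
open MeasureTheory ProbabilityTheory
noncomputable section

lemma key : ∀ (n : ℕ) {α : Fin n → Type} [∀ i, MeasurableSpace (α i)]
    (μ ν : ∀ i, Measure (α i)) [∀ i, IsProbabilityMeasure (μ i)]
    [∀ i, IsProbabilityMeasure (ν i)]
    (f : ∀ i, α i → ℝ) (_ : ∀ i, Measurable (f i))
    (_ : ∀ i t, μ i {x | t < f i x} ≤ ν i {x | t < f i x}) (t : ℝ),
    Measure.pi μ {x | t < ∑ i, f i (x i)} ≤ Measure.pi ν {x | t < ∑ i, f i (x i)} := by
  intro n
  induction n with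
  | zero =>
    intro α _ μ ν _ _ f hf h t
    rcases lt_or_ge t 0 with ht | ht
    · have : {x : ∀ i, α i | t < ∑ i, f i (x i)} = Set.univ := by
        ext x; simp [Finset.sum_of_isEmpty, ht]
      rw [this]; simp
    · have : {x : ∀ i, α i | t < ∑ i, f i (x i)} = ∅ := by
        ext x; simp [Finset.sum_of_isEmpty, not_lt, ht]
      rw [this]; simp
  | succ n ih =>
    intro α _ μ ν _ _ f hf h t
    set e := MeasurableEquiv.piFinSuccAbove α 0
    set B : Set (α 0 × ∀ j : Fin n, α ((0 : Fin (n+1)).succAbove j)) :=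
      {q | t < f 0 q.1 + ∑ j, f ((0 : Fin (n+1)).succAbove j) (q.2 j)}
    have hB : MeasurableSet B := by
      apply measurableSet_lt measurable_const
      exact ((hf 0).comp measurable_fst).add
        (Finset.measurable_sum _ fun j _ => (hf _).comp ((measurable_pi_apply j).comp measurable_snd))
    have hpre : ∀ (x : ∀ i, α i), x ∈ e ⁻¹' B ↔ t < ∑ i, f i (x i) := by
      intro x
      simp only [Set.mem_preimage, B, Set.mem_setOf_eq, e, MeasurableEquiv.piFinSuccAbove_apply,
        Fin.insertNthEquiv_symm_apply, Fin.removeNth]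
      rw [Fin.sum_univ_succAbove (fun i => f i (x i)) 0]
    have hsetμ : {x : ∀ i, α i | t < ∑ i, f i (x i)} = e ⁻¹' B := by
      ext x; exact (hpre x).symm
    have hμ := (measurePreserving_piFinSuccAbove μ 0).measure_preimage hB.nullMeasurableSet
    have hν := (measurePreserving_piFinSuccAbove ν 0).measure_preimage hB.nullMeasurableSet
    rw [hsetμ, hμ, hν]
    -- step 1: replace head
    calc ((μ 0).prod (Measure.pi fun j => μ ((0:Fin (n+1)).succAbove j))) B
        ≤ ((ν 0).prod (Measure.pi fun j => μ ((0:Fin (n+1)).succAbove j))) B := by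
          rw [Measure.prod_apply_symm hB, Measure.prod_apply_symm hB]
          apply lintegral_mono
          intro z
          have : (fun y => (y, z)) ⁻¹' B
              = {y | t - ∑ j, f ((0:Fin (n+1)).succAbove j) (z j) < f 0 y} := by
            ext y; simp [B, sub_lt_iff_lt_add]
          dsimp only
          rw [this]
          exact h 0 _
      _ ≤ ((ν 0).prod (Measure.pi fun j => ν ((0:Fin (n+1)).succAbove j))) B := by
          rw [Measure.prod_apply hB, Measure.prod_apply hB]
          apply lintegral_mono
          intro y
          have : Prod.mk y ⁻¹' B
              = {z | t - f 0 y < ∑ j, f ((0:Fin (n+1)).succAbove j) (z j)} := by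
            ext z; simp [B, sub_lt_iff_lt_add']
          dsimp only
          rw [this]
          exact ih _ _ _ (fun j => hf _) (fun j => h _) _

/-- Closure under conjunctions: if `X₁,…,Xₙ` are independent (their joint law is the product
measure), similarly `Y₁,…,Yₙ`, and `Xᵢ ⪯_l-st Yᵢ` for each `i`, then the concatenated vectors
satisfy `(X₁,…,Xₙ) ⪯_l-st (Y₁,…,Yₙ)`. -/
theorem linStOrd_pi {n : ℕ} (p : Fin n → ℕ)
    (μ ν : ∀ i, Measure (Fin (p i) → ℝ))
    [∀ i, IsProbabilityMeasure (μ i)] [∀ i, IsProbabilityMeasure (ν i)]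
    (h : ∀ i, LinStOrd (μ i) (ν i)) :
    LinStOrd ((Measure.pi μ).map (fun x (k : Σ i, Fin (p i)) => x k.1 k.2))
      ((Measure.pi ν).map (fun x (k : Σ i, Fin (p i)) => x k.1 k.2)) := by
  intro s hs t
  have hmeas : Measurable (fun (x : ∀ i, Fin (p i) → ℝ) (k : Σ i, Fin (p i)) => x k.1 k.2) :=
    measurable_pi_lambda _ fun k => (measurable_pi_apply k.2).comp (measurable_pi_apply k.1)
  have hset : MeasurableSet {x : (Σ i, Fin (p i)) → ℝ | t < ∑ k, s k * x k} := by
    apply measurableSet_lt measurable_const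
    exact Finset.measurable_sum _ fun k _ => (measurable_pi_apply k).const_mul _
  rw [Measure.map_apply hmeas hset, Measure.map_apply hmeas hset]
  have heq : (fun (x : ∀ i, Fin (p i) → ℝ) (k : Σ i, Fin (p i)) => x k.1 k.2) ⁻¹'
        {x | t < ∑ k, s k * x k}
      = {x : ∀ i, Fin (p i) → ℝ | t < ∑ i, (∑ j, s ⟨i, j⟩ * x i j)} := by
    ext x
    simp only [Set.mem_preimage, Set.mem_setOf_eq]
    rw [← Finset.univ_sigma_univ, Finset.sum_sigma]
  rw [heq]
  exact key n μ ν (fun i y => ∑ j, s ⟨i, j⟩ * y j)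
    (fun i => Finset.measurable_sum _ fun j _ => (measurable_pi_apply j).const_mul _)
    (fun i t => h i (fun j => s ⟨i, j⟩) (fun j => hs _) t) t
end
end

section
/- Let X = μ + σRU and Y = μ' + σ'RU (in distribution), where R is a nonnegative random variable independent of U, P(U = 1) = P(U = -1) = 1/2, σ, σ' > 0, and the distribution function F₀ of RU is strictly increasing on all of R. Then X ⪯_st Y if and only if μ ≤ μ' and σ = σ'. -/
open MeasureTheory ProbabilityTheory
noncomputable section

/-- Univariate elliptical location–scale representation: with `X = μ + σRU`, `Y = μ' + σ'RU`
where `R ≥ 0` is independent of `U`, `P(U = 1) = P(U = -1) = 1/2`, and the distribution function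
`F₀` of `RU` is strictly increasing on `ℝ`, one has `X ⪯_st Y ↔ (μ ≤ μ' ∧ σ = σ')`. -/
theorem elliptical_stOrd_iff
    {Ω : Type*} [MeasurableSpace Ω] (P : Measure Ω) [IsProbabilityMeasure P]
    (R U : Ω → ℝ) (hRmeas : Measurable R) (hUmeas : Measurable U)
    (hR : ∀ ω, 0 ≤ R ω) (hindep : IndepFun R U P)
    (hU1 : P {ω | U ω = 1} = 1/2) (hU2 : P {ω | U ω = -1} = 1/2)
    (μ μ' σ σ' : ℝ) (hσ : 0 < σ) (hσ' : 0 < σ')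
    (hF0 : StrictMono (fun t : ℝ => (P {ω | R ω * U ω ≤ t}).toReal)) :
    (∀ t : ℝ, P {ω | μ' + σ' * (R ω * U ω) ≤ t} ≤ P {ω | μ + σ * (R ω * U ω) ≤ t})
      ↔ (μ ≤ μ' ∧ σ = σ') := by
  have hset : ∀ (m s : ℝ), 0 < s → ∀ t : ℝ,
      {ω | m + s * (R ω * U ω) ≤ t} = {ω | R ω * U ω ≤ (t - m) / s} := by
    intro m s hs t
    ext ω
    simp only [Set.mem_setOf_eq, le_div_iff₀ hs]
    constructor <;> intro h <;> nlinarith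
  have key : ∀ t : ℝ,
      (P {ω | μ' + σ' * (R ω * U ω) ≤ t} ≤ P {ω | μ + σ * (R ω * U ω) ≤ t}) ↔
        (t - μ') / σ' ≤ (t - μ) / σ := by
    intro t
    rw [hset μ σ hσ t, hset μ' σ' hσ' t,
      ← ENNReal.toReal_le_toReal (measure_ne_top _ _) (measure_ne_top _ _)]
    exact hF0.le_iff_le
  constructor
  · intro h
    have h' : ∀ t : ℝ, (t - μ') / σ' ≤ (t - μ) / σ := fun t => (key t).mp (h t)
    have h'' : ∀ t : ℝ, t * (σ - σ') ≤ σ * μ' - σ' * μ := by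
      intro t
      have := h' t
      rw [div_le_div_iff₀ hσ' hσ] at this
      nlinarith
    have hss : σ = σ' := by
      by_contra hne
      have hd : σ - σ' ≠ 0 := sub_ne_zero.mpr hne
      have := h'' ((σ * μ' - σ' * μ + 1) / (σ - σ'))
      rw [div_mul_cancel₀ _ hd] at this
      linarith
    refine ⟨?_, hss⟩
    have := h'' 0
    rw [hss] at this
    nlinarith [hσ']
  · rintro ⟨hμ, rfl⟩ t
    refine (key t).mpr ?_
    rw [div_le_div_iff₀ hσ' hσ']
    nlinarith
end
end

section
/- Let X and Y be independent p-dimensional random vectors with X ⪯_st Y (multivariate stochastic order). If in addition P(sᵀX ≤ sᵀY) > 1/2 for some s ∈ S₊^{p-1} and sᵀX, sᵀY are continuous, then X ≺_st Y, i.e., the inequality P(X ∈ U) ≤ P(Y ∈ U) is strict for some upper set U. Equivalently, X ⪯_st Y together with P(sᵀX ≤ sᵀY) > 1/2 rules out X =_st Y. -/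
open MeasureTheory ProbabilityTheory
open scoped ENNReal
noncomputable section

/-- `X ⪯_st Y` (multivariate stochastic order): `P(X ∈ U) ≤ P(Y ∈ U)` for all upper sets `U`. -/
def MvStOrd {ι : Type*} [Fintype ι] (μ ν : Measure (ι → ℝ)) : Prop :=
  ∀ U : Set (ι → ℝ), IsUpperSet U → MeasurableSet U → μ U ≤ ν U

/-- If `X ⪯_st Y` with `X, Y` independent and, for some `s` in the positive part of the unit
sphere with `sᵀX`, `sᵀY` continuous, `P(sᵀX ≤ sᵀY) > 1/2`, then `X ≺_st Y`: the inequality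
`P(X ∈ U) ≤ P(Y ∈ U)` is strict for some upper set `U` (in particular `X =_st Y` is ruled
out). -/
theorem strict_mvStOrd_of_prob_gt_half {p : ℕ}
    {Ω : Type*} [MeasurableSpace Ω] (P : Measure Ω) [IsProbabilityMeasure P]
    (X Y : Ω → Fin p → ℝ) (hX : Measurable X) (hY : Measurable Y)
    (hindep : IndepFun X Y P)
    (hst : MvStOrd (P.map X) (P.map Y))
    (s : Fin p → ℝ) (hs0 : ∀ i, 0 ≤ s i) (hs1 : Real.sqrt (∑ i, s i ^ 2) = 1)
    (hcontX : ∀ c : ℝ, P {ω | ∑ i, s i * X ω i = c} = 0)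
    (hcontY : ∀ c : ℝ, P {ω | ∑ i, s i * Y ω i = c} = 0)
    (hgt : 1 / 2 < P {ω | ∑ i, s i * X ω i ≤ ∑ i, s i * Y ω i}) :
    ∃ U : Set (Fin p → ℝ), IsUpperSet U ∧ MeasurableSet U ∧ P.map X U < P.map Y U := by
  by_contra h
  push_neg at h
  set L : (Fin p → ℝ) → ℝ := fun x => ∑ i, s i * x i with hLdef
  have hL : Measurable L := by
    apply Finset.measurable_sum
    intro i _
    exact (measurable_pi_apply i).const_mul _
  have hf : Measurable (L ∘ X) := hL.comp hX
  have hg : Measurable (L ∘ Y) := hL.comp hY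
  have heq : ∀ U : Set (Fin p → ℝ), IsUpperSet U → MeasurableSet U →
      P.map X U = P.map Y U := fun U hU hUm =>
    le_antisymm (hst U hU hUm) (h U hU hUm)
  set μ := P.map (L ∘ X) with hμdef
  set ν := P.map (L ∘ Y) with hνdef
  haveI : IsProbabilityMeasure μ := Measure.isProbabilityMeasure_map hf.aemeasurable
  haveI : IsProbabilityMeasure ν := Measure.isProbabilityMeasure_map hg.aemeasurable
  -- distributions of the projections agree
  have hμν : μ = ν := by
    refine Measure.ext_of_Ici μ ν (fun c => ?_)
    have hU : IsUpperSet {x : Fin p → ℝ | c ≤ L x} := by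
      intro a b hab ha
      exact le_trans ha
        (Finset.sum_le_sum fun i _ => mul_le_mul_of_nonneg_left (hab i) (hs0 i))
    have hUm : MeasurableSet {x : Fin p → ℝ | c ≤ L x} :=
      measurableSet_le measurable_const hL
    have h1 := heq _ hU hUm
    rw [Measure.map_apply hX hUm, Measure.map_apply hY hUm] at h1
    rw [hμdef, hνdef, Measure.map_apply hf measurableSet_Ici,
      Measure.map_apply hg measurableSet_Ici]
    exact h1
  -- atomlessness
  have hatom : ∀ c : ℝ, ν {c} = 0 := by
    intro c
    rw [hνdef, Measure.map_apply hg (measurableSet_singleton c)]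
    exact hcontY c
  -- joint distribution
  have hjoint : P.map (fun ω => (L (X ω), L (Y ω))) = μ.prod ν :=
    (indepFun_iff_map_prod_eq_prod_map_map hf.aemeasurable hg.aemeasurable).mp
      (hindep.comp hL hL)
  set A : Set (ℝ × ℝ) := {q | q.1 ≤ q.2} with hAdef
  set B : Set (ℝ × ℝ) := {q | q.2 ≤ q.1} with hBdef
  have hAm : MeasurableSet A := measurableSet_le measurable_fst measurable_snd
  have hBm : MeasurableSet B := measurableSet_le measurable_snd measurable_fst
  rw [hμν] at hjoint
  have hPA : P {ω | ∑ i, s i * X ω i ≤ ∑ i, s i * Y ω i} = (ν.prod ν) A := by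
    have hm2 : Measurable fun ω => (L (X ω), L (Y ω)) := hf.prodMk hg
    rw [← hjoint, Measure.map_apply hm2 hAm]
    rfl
  -- symmetry
  have hsym : (ν.prod ν) A = (ν.prod ν) B := by
    have h1 : Measure.map Prod.swap (ν.prod ν) = ν.prod ν := Measure.prod_swap
    calc (ν.prod ν) A = Measure.map Prod.swap (ν.prod ν) A := by rw [h1]
      _ = (ν.prod ν) (Prod.swap ⁻¹' A) := Measure.map_apply measurable_swap hAm
      _ = (ν.prod ν) B := rfl
  -- diagonal has measure zero
  have hdiag : (ν.prod ν) (A ∩ B) = 0 := by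
    have hABm : MeasurableSet (A ∩ B) := hAm.inter hBm
    rw [Measure.prod_apply hABm]
    have : ∀ x : ℝ, ν (Prod.mk x ⁻¹' A ∩ Prod.mk x ⁻¹' B) = 0 := by
      intro x
      have hset : Prod.mk x ⁻¹' A ∩ Prod.mk x ⁻¹' B = {x} := by
        ext y
        simp [hAdef, hBdef, le_antisymm_iff, eq_comm, and_comm]
      rw [hset]
      exact hatom x
    simp [this]
  have hunion : A ∪ B = Set.univ := by
    ext q
    simp [hAdef, hBdef, le_total]
  have hsum : (ν.prod ν) A + (ν.prod ν) B = 1 := by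
    have := measure_union_add_inter (μ := ν.prod ν) A hBm
    rw [hunion, hdiag, measure_univ, add_zero] at this
    exact this.symm
  rw [hPA] at hgt
  have h2 : (1 : ℝ≥0∞) < 1 := by
    calc (1 : ℝ≥0∞) = 1 / 2 + 1 / 2 := by rw [ENNReal.add_halves]
      _ < (ν.prod ν) A + (ν.prod ν) B := ENNReal.add_lt_add hgt (hsym ▸ hgt)
      _ = 1 := hsum
  exact lt_irrefl _ h2
end
end

section
/- Let Z_{11},...,Z_{nm} be the kernel values Z_{ij} of a two-sample U-statistic, where Z_{ij} = h(X_i, Y_j) with X_1,...,X_n i.i.d., Y_1,...,Y_m i.i.d. and independent of the X's, the kernel h bounded with |h| ≤ b, and μ = E[h(X_1,Y_1)] > 0. Then P((nm)⁻¹ Σᵢ Σⱼ Z_{ij} ≤ 0) ≤ exp(-N·min(n/N, m/N)·μ²/(2b²)) where N = n + m. -/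
open MeasureTheory ProbabilityTheory
noncomputable section

/-- Core analytic inequality behind Hoeffding's lemma. -/
lemma hoeff_core (r u : ℝ) (hr0 : 0 < r) (hr1 : r ≤ 1) (hu : 0 ≤ u) :
    ((1 - r) * Real.exp u + (1 + r) * Real.exp (-u)) / 2 ≤ Real.exp (u ^ 2 / 2 - r * u) := by
  set A := (1 - r) / 2 with hA
  set B := (1 + r) / 2 with hB
  have hA0 : 0 ≤ A := by rw [hA]; linarith
  have hB0 : 0 < B := by rw [hB]; linarith
  set g : ℝ → ℝ := fun x => A * Real.exp x + B * Real.exp (-x) with hg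
  set g' : ℝ → ℝ := fun x => A * Real.exp x - B * Real.exp (-x) with hg'
  have hgpos : ∀ x, 0 < g x := fun x =>
    add_pos_of_nonneg_of_pos (by positivity) (by positivity)
  have hgd : ∀ x, HasDerivAt g (g' x) x := by
    intro x
    have h1 : HasDerivAt (fun x : ℝ => Real.exp x) (Real.exp x) x := Real.hasDerivAt_exp x
    have h2 : HasDerivAt (fun x : ℝ => Real.exp (-x)) (-Real.exp (-x)) x := by
      simpa using (hasDerivAt_neg x).exp
    exact ((h1.const_mul A).add (h2.const_mul B)).congr_deriv (by simp only [hg']; ring)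
  have hg'd : ∀ x, HasDerivAt g' (g x) x := by
    intro x
    have h1 : HasDerivAt (fun x : ℝ => Real.exp x) (Real.exp x) x := Real.hasDerivAt_exp x
    have h2 : HasDerivAt (fun x : ℝ => Real.exp (-x)) (-Real.exp (-x)) x := by
      simpa using (hasDerivAt_neg x).exp
    exact ((h1.const_mul A).sub (h2.const_mul B)).congr_deriv (by simp only [hg]; ring)
  have hkey : ∀ x, g x ^ 2 - g' x ^ 2 = 1 - r ^ 2 := by
    intro x
    have hxx : Real.exp x * Real.exp (-x) = 1 := by
      rw [← Real.exp_add]; simp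
    have h4 : (4 : ℝ) * A * B = 1 - r ^ 2 := by rw [hA, hB]; ring
    calc g x ^ 2 - g' x ^ 2 = 4 * A * B * (Real.exp x * Real.exp (-x)) := by
          rw [hg, hg']; ring
      _ = 1 - r ^ 2 := by rw [hxx, h4, mul_one]
  set G : ℝ → ℝ := fun x => x - r - g' x / g x with hG
  have hGd : ∀ x, HasDerivAt G (1 - (1 - r ^ 2) / g x ^ 2) x := by
    intro x
    have hdiv : HasDerivAt (fun x => g' x / g x)
        ((g x * g x - g' x * g' x) / g x ^ 2) x :=
      (hg'd x).div (hgd x) (hgpos x).ne'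
    have := ((hasDerivAt_id x).sub_const r).sub hdiv
    refine this.congr_deriv ?_
    rw [← hkey x]; ring
  have hg0 : g 0 = 1 := by
    show A * Real.exp 0 + B * Real.exp (-0) = 1
    rw [neg_zero, Real.exp_zero, hA, hB]; ring
  have hg'0 : g' 0 = -r := by
    show A * Real.exp 0 - B * Real.exp (-0) = -r
    rw [neg_zero, Real.exp_zero, hA, hB]; ring
  have hG0 : G 0 = 0 := by
    show (0:ℝ) - r - g' 0 / g 0 = 0
    rw [hg0, hg'0, div_one]; ring
  have hGmono : Monotone G := by
    apply monotone_of_deriv_nonneg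
    · exact fun x => (hGd x).differentiableAt
    · intro x
      rw [(hGd x).deriv]
      have h1 : 1 - r ^ 2 ≤ g x ^ 2 := by
        have := hkey x
        nlinarith [sq_nonneg (g' x)]
      have h2 : (0:ℝ) < g x ^ 2 := by positivity
      have : (1 - r ^ 2) / g x ^ 2 ≤ 1 := by
        rw [div_le_one h2]; exact h1
      linarith
  set F : ℝ → ℝ := fun x => x ^ 2 / 2 - r * x - Real.log (g x) with hF
  have hFd : ∀ x, HasDerivAt F (G x) x := by
    intro x
    have h1 : HasDerivAt (fun x : ℝ => x ^ 2 / 2) x x := by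
      simpa using (hasDerivAt_pow 2 x).div_const 2
    have h2 : HasDerivAt (fun x : ℝ => r * x) r x := by
      simpa using (hasDerivAt_id x).const_mul r
    have h3 : HasDerivAt (fun x => Real.log (g x)) (g' x / g x) x :=
      (hgd x).log (hgpos x).ne'
    exact (h1.sub h2).sub h3
  have hF0 : F 0 = 0 := by
    show (0:ℝ) ^ 2 / 2 - r * 0 - Real.log (g 0) = 0
    rw [hg0, Real.log_one]; ring
  have hFmono : MonotoneOn F (Set.Ici (0:ℝ)) := by
    apply monotoneOn_of_deriv_nonneg (convex_Ici 0)
    · exact (fun x _ => ((hFd x).differentiableAt).continuousAt.continuousWithinAt)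
    · exact fun x _ => (hFd x).differentiableAt.differentiableWithinAt
    · intro x hx
      rw [(hFd x).deriv]
      rw [interior_Ici] at hx
      calc (0:ℝ) = G 0 := hG0.symm
        _ ≤ G x := hGmono (le_of_lt hx)
  have hFu : 0 ≤ F u := by
    have := hFmono Set.self_mem_Ici (Set.mem_Ici.mpr hu) hu
    rw [hF0] at this; exact this
  have hlog : Real.log (g u) ≤ u ^ 2 / 2 - r * u := by
    simp only [hF] at hFu
    linarith
  have hgu : g u ≤ Real.exp (u ^ 2 / 2 - r * u) := by
    rw [← Real.exp_log (hgpos u)]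
    exact Real.exp_le_exp.mpr hlog
  calc ((1 - r) * Real.exp u + (1 + r) * Real.exp (-u)) / 2 = g u := by
        rw [hg, hA, hB]; ring
    _ ≤ _ := hgu

lemma neg_mul_le_of_abs (s c x : ℝ) (hs : 0 ≤ s) (hx : |x| ≤ c) : -s * x ≤ s * c := by
  have h1 := (abs_le.mp hx).1
  nlinarith

/-- Hoeffding's exponential inequality for a two-sample U-statistic with bounded kernel:
with `X₁,…,Xₙ` i.i.d., `Y₁,…,Yₘ` i.i.d., the whole family independent, `|h| ≤ b` and
`μ = E[h(X₁,Y₁)] > 0`, one has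
`P((nm)⁻¹ ∑ᵢ∑ⱼ h(Xᵢ,Yⱼ) ≤ 0) ≤ exp(-N min(n/N, m/N) μ² / (2b²))` where `N = n + m`. -/
theorem two_sample_U_hoeffding {E E' : Type*} [MeasurableSpace E] [MeasurableSpace E']
    {Ω : Type*} [MeasurableSpace Ω] (P : Measure Ω) [IsProbabilityMeasure P]
    (n m : ℕ) (hn : 0 < n) (hm : 0 < m)
    (X : Fin n → Ω → E) (Y : Fin m → Ω → E')
    (hXmeas : ∀ i, Measurable (X i)) (hYmeas : ∀ j, Measurable (Y j))
    (hindep : iIndepFun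
      (Sum.elim (fun i ω => (Sum.inl (X i ω) : E ⊕ E'))
        (fun j ω => (Sum.inr (Y j ω) : E ⊕ E'))) P)
    (hXid : ∀ i : Fin n, P.map (X i) = P.map (X ⟨0, hn⟩))
    (hYid : ∀ j : Fin m, P.map (Y j) = P.map (Y ⟨0, hm⟩))
    (h : E → E' → ℝ) (hmeas : Measurable (Function.uncurry h))
    (b : ℝ) (hb : ∀ x y, |h x y| ≤ b)
    (μval : ℝ) (hμval : μval = ∫ ω, h (X ⟨0, hn⟩ ω) (Y ⟨0, hm⟩ ω) ∂P) (hpos : 0 < μval) :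
    P {ω | (∑ i, ∑ j, h (X i ω) (Y j ω)) / ((n : ℝ) * m) ≤ 0}
      ≤ ENNReal.ofReal
          (Real.exp (-(((n + m : ℝ)) *
            min ((n : ℝ) / (n + m)) ((m : ℝ) / (n + m)) * μval ^ 2 / (2 * b ^ 2)))) := by
  classical
  haveI : NeZero n := ⟨hn.ne'⟩
  haveI : NeZero m := ⟨hm.ne'⟩
  set k := min n m with hkdef
  have hkpos : 0 < k := lt_min hn hm
  have hkn : k ≤ n := min_le_left n m
  have hkm : k ≤ m := min_le_right n m
  -- nonempty Ω
  have hΩ : Nonempty Ω := by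
    by_contra hne
    have h1 : P Set.univ = 1 := measure_univ
    rw [Set.univ_eq_empty_iff.mpr (not_nonempty_iff.mp hne), measure_empty] at h1
    exact one_ne_zero h1.symm
  obtain ⟨ω₀⟩ := hΩ
  set gE : E ⊕ E' → E := Sum.elim id (fun _ => X ⟨0, hn⟩ ω₀) with hgEdef
  set gE' : E ⊕ E' → E' := Sum.elim (fun _ => Y ⟨0, hm⟩ ω₀) id with hgE'def
  have hgE : Measurable gE := measurable_id.sumElim measurable_const
  have hgE' : Measurable gE' := measurable_const.sumElim measurable_id
  set F : Fin n ⊕ Fin m → Ω → E ⊕ E' :=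
    Sum.elim (fun i ω => (Sum.inl (X i ω) : E ⊕ E'))
      (fun j ω => (Sum.inr (Y j ω) : E ⊕ E')) with hFdef
  have hFmeas : ∀ x, Measurable (F x) := by
    rintro (i | j)
    · exact measurable_inl.comp (hXmeas i)
    · exact measurable_inr.comp (hYmeas j)
  -- basic measurability / integrability facts
  have hZmeas : ∀ (i : Fin n) (j : Fin m), Measurable (fun ω => h (X i ω) (Y j ω)) :=
    fun i j => hmeas.comp ((hXmeas i).prodMk (hYmeas j))
  have hIntOfBd : ∀ (C : ℝ) (f : Ω → ℝ), Measurable f → (∀ ω, |f ω| ≤ C) → Integrable f P :=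
    fun C f hf hC => (integrable_const C).mono' hf.aestronglyMeasurable
      (Filter.Eventually.of_forall (fun ω => by simpa [Real.norm_eq_abs] using hC ω))
  have hint00 : Integrable (fun ω => h (X ⟨0, hn⟩ ω) (Y ⟨0, hm⟩ ω)) P :=
    hIntOfBd b _ (hZmeas _ _) (fun ω => hb _ _)
  have hμb : μval ≤ b := by
    rw [hμval]
    calc ∫ ω, h (X ⟨0, hn⟩ ω) (Y ⟨0, hm⟩ ω) ∂P ≤ ∫ _ω, b ∂P :=
          integral_mono hint00 (integrable_const b) (fun ω => (abs_le.mp (hb _ _)).2)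
      _ = b := by simp
  have hbpos : 0 < b := lt_of_lt_of_le hpos hμb
  set sval := μval / b ^ 2 with hsvaldef
  have hspos : 0 < sval := div_pos hpos (by positivity)
  have hbne : b ≠ 0 := hbpos.ne'
  clear_value sval
  -- identical distribution of pairs
  have hpairlaw : ∀ (i : Fin n) (j : Fin m),
      P.map (fun ω => (X i ω, Y j ω)) = (P.map (X ⟨0, hn⟩)).prod (P.map (Y ⟨0, hm⟩)) := by
    intro i j
    have h1 : IndepFun (F (Sum.inl i)) (F (Sum.inr j)) P := hindep.indepFun (by simp)
    have hij : IndepFun (X i) (Y j) P := h1.comp hgE hgE'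
    rw [← hXid i, ← hYid j]
    exact (indepFun_iff_map_prod_eq_prod_map_map (hXmeas i).aemeasurable
      (hYmeas j).aemeasurable).mp hij
  have hlawint : ∀ (i : Fin n) (j : Fin m) (f : E × E' → ℝ), Measurable f →
      ∫ ω, f (X i ω, Y j ω) ∂P = ∫ ω, f (X ⟨0, hn⟩ ω, Y ⟨0, hm⟩ ω) ∂P := by
    intro i j f hf
    have hm1 : AEMeasurable (fun ω => (X i ω, Y j ω)) P :=
      ((hXmeas i).prodMk (hYmeas j)).aemeasurable
    have hm0 : AEMeasurable (fun ω => (X ⟨0, hn⟩ ω, Y ⟨0, hm⟩ ω)) P :=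
      ((hXmeas _).prodMk (hYmeas _)).aemeasurable
    rw [← integral_map hm1 hf.aestronglyMeasurable, ← integral_map hm0 hf.aestronglyMeasurable,
      hpairlaw i j, hpairlaw ⟨0, hn⟩ ⟨0, hm⟩]
  -- grouping independence
  have hkey : ∀ (ia : Fin k → Fin n) (jc : Fin k → Fin m), Function.Injective ia →
      Function.Injective jc → ∀ (s : Finset (Fin k)) (q : Fin k), q ∉ s →
      IndepFun (fun ω (r : s) => (X (ia r) ω, Y (jc r) ω))
        (fun ω => (X (ia q) ω, Y (jc q) ω)) P := by
    intro ia jc hia hjc s q hq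
    set S : Finset (Fin n ⊕ Fin m) :=
      s.image (fun r => Sum.inl (ia r)) ∪ s.image (fun r => Sum.inr (jc r)) with hSdef
    set T : Finset (Fin n ⊕ Fin m) := {Sum.inl (ia q), Sum.inr (jc q)} with hTdef
    have hST : Disjoint S T := by
      rw [Finset.disjoint_left]
      rintro x hxS hxT
      rw [hSdef] at hxS
      rw [hTdef] at hxT
      simp only [Finset.mem_union, Finset.mem_image] at hxS
      simp only [Finset.mem_insert, Finset.mem_singleton] at hxT
      rcases hxS with ⟨r, hr, rfl⟩ | ⟨r, hr, rfl⟩ <;> rcases hxT with hx | hx <;>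
        first
          | exact hq (by rwa [hia (Sum.inl.inj hx)] at hr)
          | exact hq (by rwa [hjc (Sum.inr.inj hx)] at hr)
          | simp at hx
    have hmem1 : ∀ r : Fin k, r ∈ s → (Sum.inl (ia r) : Fin n ⊕ Fin m) ∈ S := fun r hr => by
      rw [hSdef]; exact Finset.mem_union_left _ (Finset.mem_image_of_mem _ hr)
    have hmem2 : ∀ r : Fin k, r ∈ s → (Sum.inr (jc r) : Fin n ⊕ Fin m) ∈ S := fun r hr => by
      rw [hSdef]; exact Finset.mem_union_right _ (Finset.mem_image_of_mem _ hr)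
    have hmemT1 : (Sum.inl (ia q) : Fin n ⊕ Fin m) ∈ T := by
      rw [hTdef]; exact Finset.mem_insert_self _ _
    have hmemT2 : (Sum.inr (jc q) : Fin n ⊕ Fin m) ∈ T := by
      rw [hTdef]; exact Finset.mem_insert_of_mem (Finset.mem_singleton_self _)
    have hbig := hindep.indepFun_finset S T hST hFmeas
    have hφ : Measurable (fun v : (x : S) → E ⊕ E' => fun r : s =>
        (gE (v ⟨Sum.inl (ia r), hmem1 r r.2⟩), gE' (v ⟨Sum.inr (jc r), hmem2 r r.2⟩))) := by
      apply measurable_pi_lambda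
      intro r
      exact (hgE.comp (measurable_pi_apply _)).prodMk (hgE'.comp (measurable_pi_apply _))
    have hψ : Measurable (fun v : (x : T) → E ⊕ E' =>
        (gE (v ⟨Sum.inl (ia q), hmemT1⟩), gE' (v ⟨Sum.inr (jc q), hmemT2⟩))) :=
      (hgE.comp (measurable_pi_apply _)).prodMk (hgE'.comp (measurable_pi_apply _))
    exact hbig.comp hφ hψ
  -- independence of exp-products
  have hexpmeas : ∀ (i : Fin n) (j : Fin m),
      Measurable (fun ω => Real.exp (-sval * h (X i ω) (Y j ω))) :=
    fun i j => Real.measurable_exp.comp ((hZmeas i j).const_mul (-sval))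
  have hprodindep : ∀ (ia : Fin k → Fin n) (jc : Fin k → Fin m), Function.Injective ia →
      Function.Injective jc → ∀ (s : Finset (Fin k)) (q : Fin k), q ∉ s →
      IndepFun (fun ω => ∏ r ∈ s, Real.exp (-sval * h (X (ia r) ω) (Y (jc r) ω)))
        (fun ω => Real.exp (-sval * h (X (ia q) ω) (Y (jc q) ω))) P := by
    intro ia jc hia hjc s q hq
    have hk := hkey ia jc hia hjc s q hq
    have hφ : Measurable (fun v : (r : s) → E × E' =>
        ∏ r : s, Real.exp (-sval * h (v r).1 (v r).2)) := by
      apply Finset.measurable_prod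
      intro r _
      have h1 : Measurable (fun v : (r : s) → E × E' => h (v r).1 (v r).2) :=
        hmeas.comp (((measurable_pi_apply r).fst).prodMk ((measurable_pi_apply r).snd))
      exact Real.measurable_exp.comp (h1.const_mul (-sval))
    have hψ : Measurable (fun z : E × E' => Real.exp (-sval * h z.1 z.2)) :=
      Real.measurable_exp.comp
        ((hmeas.comp (measurable_fst.prodMk measurable_snd)).const_mul (-sval))
    have hcomp := hk.comp hφ hψ
    have heq : (fun ω => ∏ r ∈ s, Real.exp (-sval * h (X (ia r) ω) (Y (jc r) ω)))
        = (fun v : (r : s) → E × E' => ∏ r : s, Real.exp (-sval * h (v r).1 (v r).2)) ∘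
          (fun ω (r : s) => (X (ia r) ω, Y (jc r) ω)) := by
      funext ω
      simp only [Function.comp_apply]
      exact (Finset.prod_coe_sort s
        (fun r => Real.exp (-sval * h (X (ia r) ω) (Y (jc r) ω)))).symm
    rw [heq]
    exact hcomp
  -- integrability of exp terms and products
  have hexpbd : ∀ (i : Fin n) (j : Fin m) (ω : Ω),
      Real.exp (-sval * h (X i ω) (Y j ω)) ≤ Real.exp (sval * b) := by
    intro i j ω
    apply Real.exp_le_exp.mpr
    exact neg_mul_le_of_abs _ _ _ hspos.le (hb _ _)
  have hintexp : ∀ (i : Fin n) (j : Fin m),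
      Integrable (fun ω => Real.exp (-sval * h (X i ω) (Y j ω))) P := by
    intro i j
    apply hIntOfBd (Real.exp (sval * b)) _ (hexpmeas i j)
    intro ω
    rw [abs_of_pos (Real.exp_pos _)]
    exact hexpbd i j ω
  have hintprod : ∀ (ia : Fin k → Fin n) (jc : Fin k → Fin m) (s : Finset (Fin k)),
      Integrable (fun ω => ∏ r ∈ s, Real.exp (-sval * h (X (ia r) ω) (Y (jc r) ω))) P := by
    intro ia jc s
    apply hIntOfBd (Real.exp (sval * b) ^ s.card)
    · exact Finset.measurable_prod _ (fun r _ => hexpmeas _ _)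
    · intro ω
      rw [abs_of_nonneg (Finset.prod_nonneg (fun r _ => (Real.exp_pos _).le))]
      calc ∏ r ∈ s, Real.exp (-sval * h (X (ia r) ω) (Y (jc r) ω))
          ≤ ∏ _r ∈ s, Real.exp (sval * b) :=
            Finset.prod_le_prod (fun r _ => (Real.exp_pos _).le) (fun r _ => hexpbd _ _ _)
        _ = Real.exp (sval * b) ^ s.card := Finset.prod_const _
  -- product of integrals
  have hprodint : ∀ (ia : Fin k → Fin n) (jc : Fin k → Fin m), Function.Injective ia →
      Function.Injective jc → ∀ (s : Finset (Fin k)),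
      ∫ ω, ∏ r ∈ s, Real.exp (-sval * h (X (ia r) ω) (Y (jc r) ω)) ∂P
        = ∏ r ∈ s, ∫ ω, Real.exp (-sval * h (X (ia r) ω) (Y (jc r) ω)) ∂P := by
    intro ia jc hia hjc s
    induction s using Finset.induction_on with
    | empty => simp
    | @insert q s hq ih =>
      have hind := (hprodindep ia jc hia hjc s q hq).symm
      calc ∫ ω, ∏ r ∈ insert q s, Real.exp (-sval * h (X (ia r) ω) (Y (jc r) ω)) ∂P
          = ∫ ω, ((fun ω => Real.exp (-sval * h (X (ia q) ω) (Y (jc q) ω))) *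
              (fun ω => ∏ r ∈ s, Real.exp (-sval * h (X (ia r) ω) (Y (jc r) ω)))) ω ∂P := by
            simp only [Finset.prod_insert hq, Pi.mul_apply]
        _ = (∫ ω, Real.exp (-sval * h (X (ia q) ω) (Y (jc q) ω)) ∂P) *
            ∫ ω, ∏ r ∈ s, Real.exp (-sval * h (X (ia r) ω) (Y (jc r) ω)) ∂P :=
            hind.integral_mul_eq_mul_integral (hintexp _ _).aestronglyMeasurable
              (hintprod ia jc s).aestronglyMeasurable
        _ = ∏ r ∈ insert q s, ∫ ω, Real.exp (-sval * h (X (ia r) ω) (Y (jc r) ω)) ∂P := by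
            rw [ih, Finset.prod_insert hq]
  -- single-term bound (Hoeffding's lemma)
  have hterm : ∫ ω, Real.exp (-sval * h (X ⟨0, hn⟩ ω) (Y ⟨0, hm⟩ ω)) ∂P
      ≤ Real.exp (sval ^ 2 * b ^ 2 / 2 - sval * μval) := by
    set C1 := (Real.exp (sval * b) + Real.exp (-(sval * b))) / 2 with hC1
    set C2 := (Real.exp (-(sval * b)) - Real.exp (sval * b)) / (2 * b) with hC2
    have hpt : ∀ ω, Real.exp (-sval * h (X ⟨0, hn⟩ ω) (Y ⟨0, hm⟩ ω))
        ≤ C1 + C2 * h (X ⟨0, hn⟩ ω) (Y ⟨0, hm⟩ ω) := by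
      intro ω
      set z := h (X ⟨0, hn⟩ ω) (Y ⟨0, hm⟩ ω) with hz
      have hzb := abs_le.mp (hb (X ⟨0, hn⟩ ω) (Y ⟨0, hm⟩ ω))
      have hlam : 0 ≤ (b - z) / (2 * b) := div_nonneg (by rw [hz]; linarith [hzb.2]) (by linarith)
      have hnu : 0 ≤ (b + z) / (2 * b) := div_nonneg (by rw [hz]; linarith [hzb.1]) (by linarith)
      have hsum : (b - z) / (2 * b) + (b + z) / (2 * b) = 1 := by
        field_simp
        ring
      have hcx := convexOn_exp.2 (Set.mem_univ (sval * b)) (Set.mem_univ (-(sval * b))) hlam hnu hsum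
      have h2b : (2:ℝ) * b ≠ 0 := by positivity
      have harg : ((b - z) / (2 * b)) • (sval * b) + ((b + z) / (2 * b)) • (-(sval * b))
          = -sval * z := by
        rw [smul_eq_mul, smul_eq_mul]
        field_simp
        ring
      calc Real.exp (-sval * z)
          = Real.exp (((b - z) / (2 * b)) • (sval * b) + ((b + z) / (2 * b)) • (-(sval * b))) := by
            rw [harg]
        _ ≤ ((b - z) / (2 * b)) • Real.exp (sval * b)
            + ((b + z) / (2 * b)) • Real.exp (-(sval * b)) := hcx
        _ = C1 + C2 * z := by
            rw [smul_eq_mul, smul_eq_mul, hC1, hC2]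
            field_simp
            ring
    have hint2 : Integrable (fun ω => C1 + C2 * h (X ⟨0, hn⟩ ω) (Y ⟨0, hm⟩ ω)) P :=
      (integrable_const C1).add (hint00.const_mul C2)
    calc ∫ ω, Real.exp (-sval * h (X ⟨0, hn⟩ ω) (Y ⟨0, hm⟩ ω)) ∂P
        ≤ ∫ ω, (C1 + C2 * h (X ⟨0, hn⟩ ω) (Y ⟨0, hm⟩ ω)) ∂P :=
          integral_mono (hintexp _ _) hint2 hpt
      _ = C1 + C2 * μval := by
          rw [integral_add (integrable_const C1) (hint00.const_mul C2), integral_const,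
            integral_const_mul, ← hμval]
          simp
      _ ≤ Real.exp (sval ^ 2 * b ^ 2 / 2 - sval * μval) := by
          have hcore := hoeff_core (μval / b) (sval * b) (div_pos hpos hbpos)
            ((div_le_one hbpos).mpr hμb) (by positivity)
          have he1 : C1 + C2 * μval = ((1 - μval / b) * Real.exp (sval * b)
              + (1 + μval / b) * Real.exp (-(sval * b))) / 2 := by
            rw [hC1, hC2]
            field_simp
            ring
          have he2 : (sval * b) ^ 2 / 2 - (μval / b) * (sval * b)
              = sval ^ 2 * b ^ 2 / 2 - sval * μval := by
            field_simp
          rw [he1, ← he2]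
          exact hcore
  have hc0 : 0 ≤ ∫ ω, Real.exp (-sval * h (X ⟨0, hn⟩ ω) (Y ⟨0, hm⟩ ω)) ∂P :=
    integral_nonneg (fun ω => (Real.exp_pos _).le)
  -- the per-pairing bound
  set D := Real.exp (sval ^ 2 * b ^ 2 / 2 - sval * μval) with hDdef
  have hVbound : ∀ p : Fin n × Fin m,
      ∫ ω, Real.exp (-sval * ∑ r : Fin k,
        h (X (p.1 + Fin.castLE hkn r) ω) (Y (p.2 + Fin.castLE hkm r) ω)) ∂P ≤ D ^ k := by
    intro p
    have hia : Function.Injective (fun r : Fin k => p.1 + Fin.castLE hkn r) := by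
      intro r1 r2 hr
      exact Fin.castLE_injective hkn (add_left_cancel hr)
    have hjc : Function.Injective (fun r : Fin k => p.2 + Fin.castLE hkm r) := by
      intro r1 r2 hr
      exact Fin.castLE_injective hkm (add_left_cancel hr)
    calc ∫ ω, Real.exp (-sval * ∑ r : Fin k,
          h (X (p.1 + Fin.castLE hkn r) ω) (Y (p.2 + Fin.castLE hkm r) ω)) ∂P
        = ∫ ω, ∏ r : Fin k, Real.exp (-sval *
            h (X (p.1 + Fin.castLE hkn r) ω) (Y (p.2 + Fin.castLE hkm r) ω)) ∂P := by
          congr 1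
          funext ω
          rw [Finset.mul_sum, Real.exp_sum]
      _ = ∏ r : Fin k, ∫ ω, Real.exp (-sval *
            h (X (p.1 + Fin.castLE hkn r) ω) (Y (p.2 + Fin.castLE hkm r) ω)) ∂P :=
          hprodint _ _ hia hjc Finset.univ
      _ = ∏ _r : Fin k, ∫ ω, Real.exp (-sval * h (X ⟨0, hn⟩ ω) (Y ⟨0, hm⟩ ω)) ∂P := by
          refine Finset.prod_congr rfl (fun r _ => ?_)
          exact hlawint _ _ (fun z => Real.exp (-sval * h z.1 z.2))
            (Real.measurable_exp.comp
              ((hmeas.comp (measurable_fst.prodMk measurable_snd)).const_mul (-sval)))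
      _ = (∫ ω, Real.exp (-sval * h (X ⟨0, hn⟩ ω) (Y ⟨0, hm⟩ ω)) ∂P) ^ k := by
          rw [Finset.prod_const, Finset.card_univ, Fintype.card_fin]
      _ ≤ D ^ k := pow_le_pow_left₀ hc0 hterm k
  -- the combinatorial identity
  set W : Ω → ℝ := fun ω => ∑ p : Fin n × Fin m, ∑ r : Fin k,
    h (X (p.1 + Fin.castLE hkn r) ω) (Y (p.2 + Fin.castLE hkm r) ω) with hWdef
  have hW : ∀ ω, W ω = (k : ℝ) * ∑ i, ∑ j, h (X i ω) (Y j ω) := by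
    intro ω
    show (∑ p : Fin n × Fin m, ∑ r : Fin k,
      h (X (p.1 + Fin.castLE hkn r) ω) (Y (p.2 + Fin.castLE hkm r) ω)) = _
    rw [Finset.sum_comm]
    have hinner : ∀ r : Fin k, ∑ p : Fin n × Fin m,
        h (X (p.1 + Fin.castLE hkn r) ω) (Y (p.2 + Fin.castLE hkm r) ω)
          = ∑ i, ∑ j, h (X i ω) (Y j ω) := by
      intro r
      calc ∑ p : Fin n × Fin m, h (X (p.1 + Fin.castLE hkn r) ω) (Y (p.2 + Fin.castLE hkm r) ω)
          = ∑ p : Fin n × Fin m, h (X p.1 ω) (Y p.2 ω) :=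
            Equiv.sum_comp ((Equiv.addRight (Fin.castLE hkn r)).prodCongr
              (Equiv.addRight (Fin.castLE hkm r))) (fun p => h (X p.1 ω) (Y p.2 ω))
        _ = ∑ i, ∑ j, h (X i ω) (Y j ω) := Fintype.sum_prod_type _
    rw [Finset.sum_congr rfl (fun r _ => hinner r), Finset.sum_const, Finset.card_univ,
      Fintype.card_fin, nsmul_eq_mul]
  -- set equality
  have hnm : (0:ℝ) < (n : ℝ) * m := by positivity
  have hkR : (0:ℝ) < (k : ℝ) := by exact_mod_cast hkpos
  have hset : {ω | (∑ i, ∑ j, h (X i ω) (Y j ω)) / ((n : ℝ) * m) ≤ 0}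
      = {ω | W ω ≤ 0} := by
    ext ω
    simp only [Set.mem_setOf_eq]
    rw [hW ω]
    constructor
    · intro hle
      have hS : (∑ i, ∑ j, h (X i ω) (Y j ω)) ≤ 0 := by
        rcases div_nonpos_iff.mp hle with ⟨h1, h2⟩ | ⟨h1, h2⟩
        · linarith
        · exact h1
      exact mul_nonpos_of_nonneg_of_nonpos hkR.le hS
    · intro hle
      have hS : (∑ i, ∑ j, h (X i ω) (Y j ω)) ≤ 0 := by
        by_contra hc
        push_neg at hc
        nlinarith
      exact div_nonpos_of_nonpos_of_nonneg hS hnm.le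
  -- Chernoff
  set tval := sval / ((n : ℝ) * m) with htvaldef
  have htpos : 0 < tval := div_pos hspos hnm
  have hWmeas : Measurable W := by
    rw [hWdef]
    apply Finset.measurable_sum
    intro p _
    exact Finset.measurable_sum _ (fun r _ => hZmeas _ _)
  have hWbd : ∀ ω, |W ω| ≤ ((n : ℝ) * m * k) * b := by
    intro ω
    show |∑ p : Fin n × Fin m, ∑ r : Fin k,
        h (X (p.1 + Fin.castLE hkn r) ω) (Y (p.2 + Fin.castLE hkm r) ω)| ≤ _
    calc |∑ p : Fin n × Fin m, ∑ r : Fin k,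
        h (X (p.1 + Fin.castLE hkn r) ω) (Y (p.2 + Fin.castLE hkm r) ω)|
        ≤ ∑ p : Fin n × Fin m, |∑ r : Fin k,
            h (X (p.1 + Fin.castLE hkn r) ω) (Y (p.2 + Fin.castLE hkm r) ω)| :=
          Finset.abs_sum_le_sum_abs _ _
      _ ≤ ∑ _p : Fin n × Fin m, (k : ℝ) * b := by
          refine Finset.sum_le_sum (fun p _ => ?_)
          calc |∑ r : Fin k, h (X (p.1 + Fin.castLE hkn r) ω) (Y (p.2 + Fin.castLE hkm r) ω)|
              ≤ ∑ r : Fin k, |h (X (p.1 + Fin.castLE hkn r) ω) (Y (p.2 + Fin.castLE hkm r) ω)| :=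
                Finset.abs_sum_le_sum_abs _ _
            _ ≤ ∑ _r : Fin k, b := Finset.sum_le_sum (fun r _ => hb _ _)
            _ = (k : ℝ) * b := by
                rw [Finset.sum_const, Finset.card_univ, Fintype.card_fin, nsmul_eq_mul]
      _ = ((n : ℝ) * m * k) * b := by
          rw [Finset.sum_const, Finset.card_univ, Fintype.card_prod, Fintype.card_fin,
            Fintype.card_fin, nsmul_eq_mul]
          push_cast
          ring
  have hWint : Integrable (fun ω => Real.exp (-tval * W ω)) P := by
    apply hIntOfBd (Real.exp (tval * (((n : ℝ) * m * k) * b)))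
    · exact Real.measurable_exp.comp (hWmeas.const_mul (-tval))
    · intro ω
      rw [abs_of_pos (Real.exp_pos _)]
      apply Real.exp_le_exp.mpr
      exact neg_mul_le_of_abs _ _ _ htpos.le (hWbd ω)
  have hchern := measure_le_le_exp_mul_mgf (X := W) (μ := P) (t := -tval) 0
    (by linarith) hWint
  have hch2 : (P {ω | W ω ≤ 0}).toReal ≤ mgf W P (-tval) := by
    simpa [Measure.real] using hchern
  -- Jensen step
  have hVmeas : ∀ p : Fin n × Fin m, Measurable (fun ω => ∑ r : Fin k,
      h (X (p.1 + Fin.castLE hkn r) ω) (Y (p.2 + Fin.castLE hkm r) ω)) :=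
    fun p => Finset.measurable_sum _ (fun r _ => hZmeas _ _)
  have hVintexp : ∀ p : Fin n × Fin m, Integrable (fun ω => Real.exp (-sval * ∑ r : Fin k,
      h (X (p.1 + Fin.castLE hkn r) ω) (Y (p.2 + Fin.castLE hkm r) ω))) P := by
    intro p
    apply hIntOfBd (Real.exp (sval * ((k : ℝ) * b)))
    · exact Real.measurable_exp.comp ((hVmeas p).const_mul (-sval))
    · intro ω
      rw [abs_of_pos (Real.exp_pos _)]
      apply Real.exp_le_exp.mpr
      have h1 : |∑ r : Fin k, h (X (p.1 + Fin.castLE hkn r) ω) (Y (p.2 + Fin.castLE hkm r) ω)|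
          ≤ (k : ℝ) * b := by
        calc |∑ r : Fin k, h (X (p.1 + Fin.castLE hkn r) ω) (Y (p.2 + Fin.castLE hkm r) ω)|
            ≤ ∑ r : Fin k, |h (X (p.1 + Fin.castLE hkn r) ω) (Y (p.2 + Fin.castLE hkm r) ω)| :=
              Finset.abs_sum_le_sum_abs _ _
          _ ≤ ∑ _r : Fin k, b := Finset.sum_le_sum (fun r _ => hb _ _)
          _ = (k : ℝ) * b := by
              rw [Finset.sum_const, Finset.card_univ, Fintype.card_fin, nsmul_eq_mul]
      exact neg_mul_le_of_abs _ _ _ hspos.le h1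
  have hJ : mgf W P (-tval) ≤ D ^ k := by
    have hcardprod : (Finset.univ : Finset (Fin n × Fin m)).card = n * m := by
      rw [Finset.card_univ, Fintype.card_prod, Fintype.card_fin, Fintype.card_fin]
    have hnmne : ((n : ℝ) * m) ≠ 0 := hnm.ne'
    have hpt : ∀ ω, Real.exp (-tval * W ω) ≤ ∑ p : Fin n × Fin m, ((n : ℝ) * m)⁻¹ *
        Real.exp (-sval * ∑ r : Fin k,
          h (X (p.1 + Fin.castLE hkn r) ω) (Y (p.2 + Fin.castLE hkm r) ω)) := by
      intro ω
      have hJen := convexOn_exp.map_sum_le (t := (Finset.univ : Finset (Fin n × Fin m)))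
        (w := fun _ => ((n : ℝ) * m)⁻¹)
        (p := fun p => -sval * ∑ r : Fin k,
          h (X (p.1 + Fin.castLE hkn r) ω) (Y (p.2 + Fin.castLE hkm r) ω))
        (fun _ _ => by positivity)
        (by
          rw [Finset.sum_const, hcardprod, nsmul_eq_mul]
          push_cast
          field_simp)
        (fun _ _ => Set.mem_univ _)
      have harg : ∑ p : Fin n × Fin m, ((n : ℝ) * m)⁻¹ • (-sval * ∑ r : Fin k,
          h (X (p.1 + Fin.castLE hkn r) ω) (Y (p.2 + Fin.castLE hkm r) ω)) = -tval * W ω := by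
        have hWω : W ω = ∑ p : Fin n × Fin m, ∑ r : Fin k,
            h (X (p.1 + Fin.castLE hkn r) ω) (Y (p.2 + Fin.castLE hkm r) ω) := rfl
        simp only [smul_eq_mul]
        rw [hWω, htvaldef, ← Finset.mul_sum, ← Finset.mul_sum]
        field_simp
        try ring
      rw [harg] at hJen
      simpa [smul_eq_mul] using hJen
    have hrhsint : Integrable (fun ω => ∑ p : Fin n × Fin m, ((n : ℝ) * m)⁻¹ *
        Real.exp (-sval * ∑ r : Fin k,
          h (X (p.1 + Fin.castLE hkn r) ω) (Y (p.2 + Fin.castLE hkm r) ω))) P :=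
      integrable_finset_sum _ (fun p _ => (hVintexp p).const_mul _)
    calc mgf W P (-tval) = ∫ ω, Real.exp (-tval * W ω) ∂P := rfl
      _ ≤ ∫ ω, ∑ p : Fin n × Fin m, ((n : ℝ) * m)⁻¹ *
            Real.exp (-sval * ∑ r : Fin k,
              h (X (p.1 + Fin.castLE hkn r) ω) (Y (p.2 + Fin.castLE hkm r) ω)) ∂P :=
          integral_mono hWint hrhsint hpt
      _ = ∑ p : Fin n × Fin m, ((n : ℝ) * m)⁻¹ * ∫ ω, Real.exp (-sval * ∑ r : Fin k,
            h (X (p.1 + Fin.castLE hkn r) ω) (Y (p.2 + Fin.castLE hkm r) ω)) ∂P := by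
          rw [integral_finset_sum _ (fun p _ => (hVintexp p).const_mul _)]
          exact Finset.sum_congr rfl (fun p _ => integral_const_mul _ _)
      _ ≤ ∑ _p : Fin n × Fin m, ((n : ℝ) * m)⁻¹ * D ^ k :=
          Finset.sum_le_sum (fun p _ => mul_le_mul_of_nonneg_left (hVbound p)
            (by positivity))
      _ = D ^ k := by
          rw [Finset.sum_const, hcardprod, nsmul_eq_mul]
          push_cast
          field_simp
  -- final assembly
  have hDk : D ^ k = Real.exp (-((k : ℝ) * μval ^ 2 / (2 * b ^ 2))) := by
    rw [hDdef, ← Real.exp_nat_mul]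
    congr 1
    rw [hsvaldef]
    field_simp
    ring
  have hfinal : (P {ω | W ω ≤ 0}).toReal ≤ Real.exp (-((k : ℝ) * μval ^ 2 / (2 * b ^ 2))) := by
    calc (P {ω | W ω ≤ 0}).toReal ≤ mgf W P (-tval) := hch2
      _ ≤ D ^ k := hJ
      _ = _ := hDk
  have hexpeq : -(((n : ℝ) + m) * min ((n : ℝ) / ((n:ℝ) + m)) ((m : ℝ) / ((n:ℝ) + m))
      * μval ^ 2 / (2 * b ^ 2)) = -((k : ℝ) * μval ^ 2 / (2 * b ^ 2)) := by
    have hN : (0:ℝ) < (n : ℝ) + m := by positivity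
    rw [min_div_div_right hN.le, ← Nat.cast_min, ← hkdef]
    have h2 : ((n:ℝ) + m) * ((k:ℝ) / ((n:ℝ) + m)) = (k:ℝ) := by field_simp
    rw [h2]
  rw [hset]
  calc P {ω | W ω ≤ 0} = ENNReal.ofReal ((P {ω | W ω ≤ 0}).toReal) :=
        (ENNReal.ofReal_toReal (measure_ne_top P _)).symm
    _ ≤ ENNReal.ofReal (Real.exp (-((k : ℝ) * μval ^ 2 / (2 * b ^ 2)))) :=
        ENNReal.ofReal_le_ofReal hfinal
    _ = _ := by rw [← hexpeq]
end
end
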